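/- Let Φ be a Young function and φ ∈ G^dec (almost decreasing, with φ(r)rⁿ almost increasing) satisfying ∫_0^r φ(t)t^{n−1} dt ≤ C φ(r) rⁿ for all r > 0. Then the function g(x) = Φ⁻¹(φ(|x|)) belongs to the Orlicz–Morrey space L^{(Φ,φ)}(ℝⁿ), with ‖g‖_{L^{(Φ,φ)}} bounded by a constant depending only on Φ, φ, and n. -/

import Mathlib

open MeasureTheory ENNReal NNReal Metric Set Filter Topology

noncomputable def geninv (Φ : ℝ≥0∞ → ℝ≥0∞) (u : ℝ≥0∞) : ℝ≥0∞ :=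
  sInf {t : ℝ≥0∞ | u < Φ t}

/-- Generalized Young function (class Φ_Y of the paper): increasing, vanishing at 0,
infinite at ∞, convex, left continuous, nondegenerate. -/
def IsYoung (Φ : ℝ≥0∞ → ℝ≥0∞) : Prop :=
  Monotone Φ ∧ Φ 0 = 0 ∧ Φ ⊤ = ⊤ ∧
    (∀ x y a b : ℝ≥0∞, a + b = 1 → Φ (a * x + b * y) ≤ a * Φ x + b * Φ y) ∧
    (∀ t : ℝ≥0∞, 0 < t → ContinuousWithinAt Φ (Set.Iio t) t) ∧
    (∃ t : ℝ≥0∞, 0 < t ∧ Φ t < ⊤) ∧ (∃ t : ℝ≥0∞, t ≠ ⊤ ∧ 0 < Φ t)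

/-- The class `G^dec`: positive, almost decreasing, and `r ↦ φ(r) rⁿ` almost increasing. -/
def Gdec (n : ℕ) (φ : ℝ → ℝ≥0∞) : Prop :=
  (∀ r : ℝ, 0 < r → 0 < φ r ∧ φ r < ⊤) ∧
    ∃ C : ℝ≥0∞, 0 < C ∧ C ≠ ⊤ ∧ ∀ r s : ℝ, 0 < r → r < s →
      φ s ≤ C * φ r ∧ φ r * ENNReal.ofReal r ^ n ≤ C * (φ s * ENNReal.ofReal s ^ n)

/-- Orlicz–Morrey functional on a single ball `B(a,r)`. -/
noncomputable def ballNorm (Φ : ℝ≥0∞ → ℝ≥0∞) (φ : ℝ → ℝ≥0∞) {d : ℕ}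
    (a : EuclideanSpace ℝ (Fin d)) (r : ℝ) (f : EuclideanSpace ℝ (Fin d) → ℝ≥0∞) : ℝ≥0∞ :=
  sInf {l : ℝ≥0∞ | 0 < l ∧
    (∫⁻ x in ball a r, Φ (f x / l)) ≤ φ r * volume (ball a r)}

/-- Weak Orlicz–Morrey functional on a single ball `B(a,r)`. -/
noncomputable def wBallNorm (Φ : ℝ≥0∞ → ℝ≥0∞) (φ : ℝ → ℝ≥0∞) {d : ℕ}
    (a : EuclideanSpace ℝ (Fin d)) (r : ℝ) (f : EuclideanSpace ℝ (Fin d) → ℝ≥0∞) : ℝ≥0∞ :=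
  sInf {l : ℝ≥0∞ | 0 < l ∧ ∀ t : ℝ≥0∞, 0 < t → t ≠ ⊤ →
    Φ t * volume {x ∈ ball a r | t < f x / l} ≤ φ r * volume (ball a r)}

/-- Orlicz–Morrey norm. -/
noncomputable def omNorm (Φ : ℝ≥0∞ → ℝ≥0∞) (φ : ℝ → ℝ≥0∞) {d : ℕ}
    (f : EuclideanSpace ℝ (Fin d) → ℝ≥0∞) : ℝ≥0∞ :=
  ⨆ (a : EuclideanSpace ℝ (Fin d)) (r : ℝ) (_ : 0 < r), ballNorm Φ φ a r f

/-- Weak Orlicz–Morrey norm. -/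
noncomputable def womNorm (Φ : ℝ≥0∞ → ℝ≥0∞) (φ : ℝ → ℝ≥0∞) {d : ℕ}
    (f : EuclideanSpace ℝ (Fin d) → ℝ≥0∞) : ℝ≥0∞ :=
  ⨆ (a : EuclideanSpace ℝ (Fin d)) (r : ℝ) (_ : 0 < r), wBallNorm Φ φ a r f

lemma young_geninv_le {Φ : ℝ≥0∞ → ℝ≥0∞} (hΦ : IsYoung Φ) (u : ℝ≥0∞) :
    Φ (geninv Φ u) ≤ u := by
  obtain ⟨hmono, h0, -, -, hlc, -, -⟩ := hΦ
  set s := geninv Φ u with hs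
  have hle : ∀ t, t < s → Φ t ≤ u := by
    intro t ht
    by_contra h
    have hmem : t ∈ {t : ℝ≥0∞ | u < Φ t} := not_le.1 h
    have : s ≤ t := sInf_le hmem
    exact absurd this (not_le.2 ht)
  rcases eq_or_lt_of_le (zero_le : 0 ≤ s) with h | h
  · rw [← h, h0]; exact zero_le
  · haveI : (𝓝[<] s).NeBot := nhdsWithin_Iio_self_neBot' ⟨0, h⟩
    exact le_of_tendsto (hlc s h) (eventually_nhdsWithin_of_forall hle)

lemma young_div_le {Φ : ℝ≥0∞ → ℝ≥0∞} (hΦ : IsYoung Φ) {L : ℝ≥0∞} (hL : 1 ≤ L) (x : ℝ≥0∞) :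
    Φ (x / L) ≤ L⁻¹ * Φ x := by
  obtain ⟨-, h0, -, hconv, -, -, -⟩ := hΦ
  have ha : L⁻¹ ≤ 1 := ENNReal.inv_le_one.2 hL
  have hab : L⁻¹ + (1 - L⁻¹) = 1 := add_tsub_cancel_of_le ha
  have := hconv x 0 L⁻¹ (1 - L⁻¹) hab
  simpa [h0, ENNReal.div_eq_inv_mul] using this

lemma gdec_zero_absurd {φ : ℝ → ℝ≥0∞} (hφ : Gdec 0 φ)
    {C₀ : ℝ≥0∞} (hC₀top : C₀ ≠ ⊤) (hintb : ∀ r : ℝ, 0 < r →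
      (∫⁻ t in Set.Ioc (0 : ℝ) r, φ t * ENNReal.ofReal t ^ (0 - 1)) ≤
        C₀ * (φ r * ENNReal.ofReal r ^ 0)) : False := by
  obtain ⟨hpos, Cg, hCgpos, hCgtop, hC⟩ := hφ
  set Cp : ℝ≥0∞ := max Cg 1 with hCpdef
  have hCp1 : (1:ℝ≥0∞) ≤ Cp := le_max_right _ _
  have hCptop : Cp ≠ ⊤ := by
    simp [hCpdef, hCgtop, max_eq_iff]
  have hCp0 : Cp ≠ 0 := by positivity
  have hCg_le : Cg ≤ Cp := le_max_left _ _
  have hlow : ∀ r : ℝ, 0 < r → φ 1 ≤ Cp * φ r := by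
    intro r hr
    rcases lt_trichotomy r 1 with h | h | h
    · exact ((hC r 1 hr h).1).trans (mul_le_mul_left hCg_le _)
    · rw [h]; exact le_mul_of_one_le_left zero_le hCp1
    · have := (hC 1 r one_pos h).2
      simpa using this.trans (mul_le_mul_left hCg_le _)
  have hφ1pos := (hpos 1 one_pos).1
  have hφ1top := (hpos 1 one_pos).2
  have key : ∀ r : ℝ, 1 < r → ENNReal.ofReal r ≤ Cp * (φ 1)⁻¹ * (C₀ * (Cp * φ 1)) := by
    intro r hr
    have hr0 : (0:ℝ) < r := lt_trans one_pos hr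
    have h1 : Cp⁻¹ * φ 1 * ENNReal.ofReal r ≤
        ∫⁻ t in Set.Ioc (0 : ℝ) r, φ t * ENNReal.ofReal t ^ (0 - 1) := by
      have hlb : ∀ t ∈ Set.Ioc (0:ℝ) r, Cp⁻¹ * φ 1 ≤ φ t * ENNReal.ofReal t ^ (0 - 1) := by
        intro t ht
        have := hlow t ht.1
        rw [show (0:ℕ) - 1 = 0 from rfl, pow_zero, mul_one]
        rw [← ENNReal.inv_mul_le_iff hCp0 hCptop] at this
        exact this
      calc Cp⁻¹ * φ 1 * ENNReal.ofReal r
          = Cp⁻¹ * φ 1 * volume (Set.Ioc (0:ℝ) r) := by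
            rw [Real.volume_Ioc, sub_zero]
        _ = ∫⁻ _ in Set.Ioc (0:ℝ) r, Cp⁻¹ * φ 1 := (setLIntegral_const _ _).symm
        _ ≤ _ := by
            refine lintegral_mono_ae ?_
            exact (ae_restrict_iff' measurableSet_Ioc).2 (ae_of_all _ hlb)
    have h2 := (hintb r hr0)
    have h3 : C₀ * (φ r * ENNReal.ofReal r ^ 0) ≤ C₀ * (Cp * φ 1) := by
      have : φ r ≤ Cp * φ 1 := ((hC 1 r one_pos hr).1).trans (mul_le_mul_left hCg_le _)
      rw [pow_zero, mul_one]
      exact mul_le_mul_right this _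
    have h4 : Cp⁻¹ * φ 1 * ENNReal.ofReal r ≤ C₀ * (Cp * φ 1) := le_trans h1 (h2.trans h3)
    calc ENNReal.ofReal r = Cp * (φ 1)⁻¹ * (Cp⁻¹ * φ 1 * ENNReal.ofReal r) := by
          rw [show Cp * (φ 1)⁻¹ * (Cp⁻¹ * φ 1 * ENNReal.ofReal r)
              = (Cp * Cp⁻¹) * ((φ 1)⁻¹ * φ 1) * ENNReal.ofReal r by ring,
            ENNReal.mul_inv_cancel hCp0 hCptop,
            ENNReal.inv_mul_cancel hφ1pos.ne' hφ1top.ne, one_mul, one_mul]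
      _ ≤ Cp * (φ 1)⁻¹ * (C₀ * (Cp * φ 1)) := mul_le_mul_right h4 _
  set M : ℝ≥0∞ := Cp * (φ 1)⁻¹ * (C₀ * (Cp * φ 1)) with hM
  have hMtop : M ≠ ⊤ := by
    apply ENNReal.mul_ne_top (ENNReal.mul_ne_top hCptop (ENNReal.inv_ne_top.2 hφ1pos.ne'))
    exact ENNReal.mul_ne_top hC₀top (ENNReal.mul_ne_top hCptop hφ1top.ne)
  have hkey := key (M.toReal + 2) (by linarith [ENNReal.toReal_nonneg (a := M)])
  rw [ENNReal.ofReal_le_iff_le_toReal hMtop] at hkey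
  linarith [ENNReal.toReal_nonneg (a := M)]

lemma ball_lintegral_le {d : ℕ} (hd : 0 < d) (φ : ℝ → ℝ≥0∞)
    {Cp : ℝ≥0∞} (hCp1 : 1 ≤ Cp) (hCptop : Cp ≠ ⊤)
    (hdec : ∀ u v : ℝ, 0 < u → u ≤ v → φ v ≤ Cp * φ u)
    {r : ℝ} (hr : 0 < r) :
    (∫⁻ x in ball (0 : EuclideanSpace ℝ (Fin d)) r, φ ‖x‖) ≤
      (Cp ^ 2 * 4 ^ d * volume (ball (0 : EuclideanSpace ℝ (Fin d)) 1)) *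
        ∫⁻ t in Set.Ioc (0 : ℝ) r, φ t * ENNReal.ofReal t ^ (d - 1) := by
  haveI : Nonempty (Fin d) := Fin.pos_iff_nonempty.1 hd
  haveI : Nontrivial (EuclideanSpace ℝ (Fin d)) := inferInstance
  have hCp0 : Cp ≠ 0 := (zero_lt_one.trans_le hCp1).ne'
  set ωd := volume (ball (0 : EuclideanSpace ℝ (Fin d)) 1) with hωd
  set rk : ℕ → ℝ := fun k => r * (2:ℝ)⁻¹ ^ k with hrk
  have hrkpos : ∀ k, 0 < rk k := fun k => by
    rw [hrk]; positivity
  have hrk0 : rk 0 = r := by simp [hrk]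
  have hrksucc : ∀ k, rk (k+1) = rk k * 2⁻¹ := fun k => by
    simp only [hrk, pow_succ]; ring
  have hrkanti : ∀ k l, k ≤ l → rk l ≤ rk k := by
    intro k l hkl
    exact mul_le_mul_of_nonneg_left
      (pow_le_pow_of_le_one (by norm_num) (by norm_num) hkl) hr.le
  set A : ℕ → Set (EuclideanSpace ℝ (Fin d)) :=
    fun k => ball 0 (rk k) \ ball 0 (rk (k+1)) with hA
  set I : ℕ → Set ℝ := fun k => Set.Ioc (rk (k+2)) (rk (k+1)) with hI
  have hAmeas : ∀ k, MeasurableSet (A k) := fun k => measurableSet_ball.diff measurableSet_ball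
  -- covering
  have hcover : ball (0 : EuclideanSpace ℝ (Fin d)) r ⊆ {0} ∪ ⋃ k, A k := by
    intro x hx
    rcases eq_or_ne x 0 with h0 | h0
    · exact Or.inl h0
    have hxpos : 0 < ‖x‖ := norm_pos_iff.2 h0
    have hex : ∃ k, rk (k+1) ≤ ‖x‖ := by
      obtain ⟨n, hn⟩ := exists_pow_lt_of_lt_one (div_pos hxpos hr) (by norm_num : (2:ℝ)⁻¹ < 1)
      refine ⟨n, ?_⟩
      have hlt : rk n < ‖x‖ := by
        rw [hrk]
        calc r * (2:ℝ)⁻¹ ^ n < r * (‖x‖ / r) := mul_lt_mul_of_pos_left hn hr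
          _ = ‖x‖ := by field_simp
      exact le_of_lt (lt_of_le_of_lt (hrkanti n (n+1) (Nat.le_succ n)) hlt)
    have h1 : rk (Nat.find hex + 1) ≤ ‖x‖ := Nat.find_spec hex
    have h2 : ‖x‖ < rk (Nat.find hex) := by
      rcases Nat.eq_zero_or_pos (Nat.find hex) with h | h
      · rw [h, hrk0]; exact mem_ball_zero_iff.1 hx
      · obtain ⟨m, hm⟩ := Nat.exists_eq_succ_of_ne_zero h.ne'
        have hmin := Nat.find_min hex (by omega : m < Nat.find hex)
        rw [hm]
        exact not_le.1 hmin
    refine Or.inr (Set.mem_iUnion.2 ⟨Nat.find hex, ?_, ?_⟩)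
    · exact mem_ball_zero_iff.2 h2
    · exact fun hmem => absurd (mem_ball_zero_iff.1 hmem) (not_lt.2 h1)
  -- per-annulus upper bound
  have stepA : ∀ k, (∫⁻ x in A k, φ ‖x‖) ≤
      Cp * φ (rk (k+1)) * (ENNReal.ofReal (rk k) ^ d * ωd) := by
    intro k
    have hb : ∀ x ∈ A k, φ ‖x‖ ≤ Cp * φ (rk (k+1)) := by
      intro x hx
      exact hdec (rk (k+1)) ‖x‖ (hrkpos _)
        (not_lt.1 fun h => hx.2 (mem_ball_zero_iff.2 h))
    calc (∫⁻ x in A k, φ ‖x‖) ≤ ∫⁻ _ in A k, Cp * φ (rk (k+1)) :=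
          lintegral_mono_ae ((ae_restrict_iff' (hAmeas k)).2 (ae_of_all _ hb))
      _ = Cp * φ (rk (k+1)) * volume (A k) := setLIntegral_const _ _
      _ ≤ Cp * φ (rk (k+1)) * (ENNReal.ofReal (rk k) ^ d * ωd) := by
          refine mul_le_mul_right ?_ _
          calc volume (A k) ≤ volume (ball (0 : EuclideanSpace ℝ (Fin d)) (rk k)) :=
                measure_mono diff_subset
            _ = ENNReal.ofReal ((rk k) ^ d) * ωd := by
                rw [Measure.addHaar_ball_of_pos _ _ (hrkpos k), finrank_euclideanSpace_fin]
            _ = ENNReal.ofReal (rk k) ^ d * ωd := by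
                rw [ENNReal.ofReal_pow (hrkpos k).le]
  -- per-interval lower bound
  have stepI : ∀ k, φ (rk (k+1)) * ENNReal.ofReal (rk (k+2)) ^ d ≤
      Cp * ∫⁻ t in I k, φ t * ENNReal.ofReal t ^ (d-1) := by
    intro k
    have hb : ∀ t ∈ I k, Cp⁻¹ * (φ (rk (k+1)) * ENNReal.ofReal (rk (k+2)) ^ (d-1)) ≤
        φ t * ENNReal.ofReal t ^ (d-1) := by
      intro t ht
      have h1 : φ (rk (k+1)) ≤ Cp * φ t :=
        hdec t (rk (k+1)) (lt_trans (hrkpos _) ht.1) ht.2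
      have h2 : ENNReal.ofReal (rk (k+2)) ^ (d-1) ≤ ENNReal.ofReal t ^ (d-1) :=
        pow_le_pow_left₀ zero_le (ENNReal.ofReal_le_ofReal ht.1.le) _
      calc Cp⁻¹ * (φ (rk (k+1)) * ENNReal.ofReal (rk (k+2)) ^ (d-1))
          ≤ Cp⁻¹ * ((Cp * φ t) * ENNReal.ofReal t ^ (d-1)) :=
            mul_le_mul_right (mul_le_mul' h1 h2) _
        _ = (Cp⁻¹ * Cp) * (φ t * ENNReal.ofReal t ^ (d-1)) := by ring
        _ = φ t * ENNReal.ofReal t ^ (d-1) := by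
            rw [ENNReal.inv_mul_cancel hCp0 hCptop, one_mul]
    have hIvol : volume (I k) = ENNReal.ofReal (rk (k+2)) := by
      rw [hI]
      rw [Real.volume_Ioc]
      congr 1
      have h := hrksucc (k+1)
      linarith
    have hlow : Cp⁻¹ * (φ (rk (k+1)) * ENNReal.ofReal (rk (k+2)) ^ (d-1)) *
        ENNReal.ofReal (rk (k+2)) ≤ ∫⁻ t in I k, φ t * ENNReal.ofReal t ^ (d-1) := by
      calc Cp⁻¹ * (φ (rk (k+1)) * ENNReal.ofReal (rk (k+2)) ^ (d-1)) * ENNReal.ofReal (rk (k+2))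
          = Cp⁻¹ * (φ (rk (k+1)) * ENNReal.ofReal (rk (k+2)) ^ (d-1)) * volume (I k) := by
            rw [hIvol]
        _ = ∫⁻ _ in I k, Cp⁻¹ * (φ (rk (k+1)) * ENNReal.ofReal (rk (k+2)) ^ (d-1)) :=
            (setLIntegral_const _ _).symm
        _ ≤ _ := lintegral_mono_ae ((ae_restrict_iff' measurableSet_Ioc).2 (ae_of_all _ hb))
    have hmul := mul_le_mul_right hlow Cp
    have hEq : Cp * (Cp⁻¹ * (φ (rk (k+1)) * ENNReal.ofReal (rk (k+2)) ^ (d-1)) *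
        ENNReal.ofReal (rk (k+2))) = φ (rk (k+1)) * ENNReal.ofReal (rk (k+2)) ^ d := by
      rw [show Cp * (Cp⁻¹ * (φ (rk (k+1)) * ENNReal.ofReal (rk (k+2)) ^ (d-1)) *
            ENNReal.ofReal (rk (k+2)))
          = (Cp * Cp⁻¹) * (φ (rk (k+1)) *
            (ENNReal.ofReal (rk (k+2)) ^ (d-1) * ENNReal.ofReal (rk (k+2)))) by ring,
        ENNReal.mul_inv_cancel hCp0 hCptop, one_mul, ← pow_succ, Nat.sub_add_cancel hd]
    rw [← hEq]
    exact hmul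
  -- combine per k
  have hcomb : ∀ k, (∫⁻ x in A k, φ ‖x‖) ≤
      (Cp^2 * 4^d * ωd) * ∫⁻ t in I k, φ t * ENNReal.ofReal t ^ (d-1) := by
    intro k
    have h44 : ENNReal.ofReal (rk k) ^ d = 4^d * ENNReal.ofReal (rk (k+2)) ^ d := by
      have h4 : rk k = 4 * rk (k+2) := by
        rw [hrksucc, hrksucc]; ring
      rw [h4, ENNReal.ofReal_mul (by norm_num), mul_pow, ENNReal.ofReal_ofNat]
    calc (∫⁻ x in A k, φ ‖x‖) ≤ Cp * φ (rk (k+1)) * (ENNReal.ofReal (rk k) ^ d * ωd) := stepA k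
      _ = (Cp * 4^d * ωd) * (φ (rk (k+1)) * ENNReal.ofReal (rk (k+2)) ^ d) := by
          rw [h44]; ring
      _ ≤ (Cp * 4^d * ωd) * (Cp * ∫⁻ t in I k, φ t * ENNReal.ofReal t ^ (d-1)) :=
          mul_le_mul_right (stepI k) _
      _ = (Cp^2 * 4^d * ωd) * ∫⁻ t in I k, φ t * ENNReal.ofReal t ^ (d-1) := by ring
  -- disjointness and sum over intervals
  have hdisj : Pairwise (Function.onFun Disjoint I) := by
    have key : ∀ k l, k < l → Disjoint (I k) (I l) := by
      intro k l hkl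
      rw [hI, Set.Ioc_disjoint_Ioc]
      exact le_trans (min_le_right _ _)
        (le_trans (hrkanti (k+2) (l+1) (by omega)) (le_max_left _ _))
    intro k l hkl
    rcases hkl.lt_or_gt with h | h
    · exact key _ _ h
    · exact (key _ _ h).symm
  have hsum : (∑' k, ∫⁻ t in I k, φ t * ENNReal.ofReal t ^ (d-1)) ≤
      ∫⁻ t in Set.Ioc (0:ℝ) r, φ t * ENNReal.ofReal t ^ (d-1) := by
    rw [← lintegral_sum_measure, ← Measure.restrict_iUnion hdisj (fun k => measurableSet_Ioc)]
    refine lintegral_mono_set (Set.iUnion_subset fun k => Set.Ioc_subset_Ioc (hrkpos (k+2)).le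
      ((hrkanti 0 (k+1) (by omega)).trans_eq hrk0))
  -- final chain
  calc (∫⁻ x in ball (0 : EuclideanSpace ℝ (Fin d)) r, φ ‖x‖)
      ≤ ∫⁻ x in ({0} ∪ ⋃ k, A k : Set (EuclideanSpace ℝ (Fin d))), φ ‖x‖ :=
        lintegral_mono_set hcover
    _ ≤ (∫⁻ x in ({0} : Set (EuclideanSpace ℝ (Fin d))), φ ‖x‖) +
        ∫⁻ x in ⋃ k, A k, φ ‖x‖ := lintegral_union_le _ _ _
    _ = ∫⁻ x in ⋃ k, A k, φ ‖x‖ := by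
        rw [lintegral_singleton, measure_singleton, mul_zero, zero_add]
    _ ≤ ∑' k, ∫⁻ x in A k, φ ‖x‖ := lintegral_iUnion_le _ _
    _ ≤ ∑' k, (Cp^2 * 4^d * ωd) * ∫⁻ t in I k, φ t * ENNReal.ofReal t ^ (d-1) :=
        ENNReal.tsum_le_tsum hcomb
    _ = (Cp^2 * 4^d * ωd) * ∑' k, ∫⁻ t in I k, φ t * ENNReal.ofReal t ^ (d-1) :=
        ENNReal.tsum_mul_left
    _ ≤ (Cp^2 * 4^d * ωd) * ∫⁻ t in Set.Ioc (0:ℝ) r, φ t * ENNReal.ofReal t ^ (d-1) :=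
        mul_le_mul_right hsum _

lemma ball_lintegral_le' {d : ℕ} (hd : 0 < d) (φ : ℝ → ℝ≥0∞)
    {Cp C₀ : ℝ≥0∞} (hCp1 : 1 ≤ Cp) (hCptop : Cp ≠ ⊤)
    (hdec : ∀ u v : ℝ, 0 < u → u ≤ v → φ v ≤ Cp * φ u)
    (hintb : ∀ r : ℝ, 0 < r →
      (∫⁻ t in Set.Ioc (0 : ℝ) r, φ t * ENNReal.ofReal t ^ (d - 1)) ≤
        C₀ * (φ r * ENNReal.ofReal r ^ d))
    (a : EuclideanSpace ℝ (Fin d)) {r : ℝ} (hr : 0 < r) :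
    (∫⁻ x in ball a r, φ ‖x‖) ≤
      (Cp^2 * 4^d * C₀ + Cp) * (φ r * volume (ball a r)) := by
  set ωd := volume (ball (0 : EuclideanSpace ℝ (Fin d)) 1) with hωd
  have hvol : volume (ball a r) = ENNReal.ofReal r ^ d * ωd := by
    rw [Measure.addHaar_ball_of_pos _ _ hr, finrank_euclideanSpace_fin,
      ENNReal.ofReal_pow hr.le]
  have hpt : ∀ x : EuclideanSpace ℝ (Fin d), φ ‖x‖ ≤
      (ball (0 : EuclideanSpace ℝ (Fin d)) r).indicator (fun y => φ ‖y‖) x + Cp * φ r := by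
    intro x
    by_cases hx : x ∈ ball (0 : EuclideanSpace ℝ (Fin d)) r
    · rw [Set.indicator_of_mem hx]; exact le_self_add
    · rw [Set.indicator_of_notMem hx, zero_add]
      exact hdec r ‖x‖ hr (not_lt.1 fun h => hx (mem_ball_zero_iff.2 h))
  calc (∫⁻ x in ball a r, φ ‖x‖)
      ≤ ∫⁻ x in ball a r,
          ((ball (0 : EuclideanSpace ℝ (Fin d)) r).indicator (fun y => φ ‖y‖) x + Cp * φ r) :=
        lintegral_mono hpt
    _ = (∫⁻ x in ball a r, (ball (0 : EuclideanSpace ℝ (Fin d)) r).indicator (fun y => φ ‖y‖) x)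
        + (Cp * φ r) * volume (ball a r) := by
        rw [lintegral_add_right _ measurable_const, setLIntegral_const]
    _ ≤ (∫⁻ x, (ball (0 : EuclideanSpace ℝ (Fin d)) r).indicator (fun y => φ ‖y‖) x)
        + (Cp * φ r) * volume (ball a r) :=
        add_le_add_left (setLIntegral_le_lintegral _ _) _
    _ = (∫⁻ x in ball (0 : EuclideanSpace ℝ (Fin d)) r, φ ‖x‖)
        + (Cp * φ r) * volume (ball a r) := by
        rw [lintegral_indicator measurableSet_ball]
    _ ≤ (Cp^2 * 4^d * ωd) * (∫⁻ t in Set.Ioc (0:ℝ) r, φ t * ENNReal.ofReal t ^ (d-1))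
        + (Cp * φ r) * volume (ball a r) :=
        add_le_add_left (ball_lintegral_le hd φ hCp1 hCptop hdec hr) _
    _ ≤ (Cp^2 * 4^d * ωd) * (C₀ * (φ r * ENNReal.ofReal r ^ d))
        + (Cp * φ r) * volume (ball a r) :=
        add_le_add_left (mul_le_mul_right (hintb r hr) _) _
    _ = (Cp^2 * 4^d * C₀ + Cp) * (φ r * volume (ball a r)) := by
        rw [hvol]; ring

/-- `g(x) = Φ⁻¹(φ(|x|))` belongs to the Orlicz–Morrey space `L^{(Φ,φ)}`. -/
theorem stmt16 {d : ℕ} (Φ : ℝ≥0∞ → ℝ≥0∞) (hΦ : IsYoung Φ)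
    (φ : ℝ → ℝ≥0∞) (hφ : Gdec d φ)
    (hint : ∃ C₀ : ℝ≥0∞, C₀ ≠ ⊤ ∧ ∀ r : ℝ, 0 < r →
      (∫⁻ t in Set.Ioc (0 : ℝ) r, φ t * ENNReal.ofReal t ^ (d - 1)) ≤
        C₀ * (φ r * ENNReal.ofReal r ^ d)) :
    ∃ C : ℝ≥0∞, C ≠ ⊤ ∧
      omNorm Φ φ (fun x : EuclideanSpace ℝ (Fin d) => geninv Φ (φ ‖x‖)) ≤ C := by
  obtain ⟨C₀, hC₀top, hintb⟩ := hint
  rcases Nat.eq_zero_or_pos d with hd0 | hd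
  · subst hd0
    exact absurd (gdec_zero_absurd hφ hC₀top hintb) id
  obtain ⟨hpos, Cg, hCgpos, hCgtop, hC⟩ := hφ
  set Cp : ℝ≥0∞ := max Cg 1 with hCpdef
  have hCp1 : (1:ℝ≥0∞) ≤ Cp := le_max_right _ _
  have hCptop : Cp ≠ ⊤ := by simp [hCpdef, hCgtop, max_eq_iff]
  have hdec : ∀ u v : ℝ, 0 < u → u ≤ v → φ v ≤ Cp * φ u := by
    intro u v hu huv
    rcases eq_or_lt_of_le huv with h | h
    · rw [← h]; exact le_mul_of_one_le_left zero_le hCp1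
    · exact ((hC u v hu h).1).trans (mul_le_mul_left (le_max_left _ _) _)
  set Ct : ℝ≥0∞ := Cp^2 * 4^d * C₀ + Cp with hCt
  set L : ℝ≥0∞ := max 1 Ct with hLdef
  have hL1 : (1:ℝ≥0∞) ≤ L := le_max_left _ _
  have hL0 : L ≠ 0 := (zero_lt_one.trans_le hL1).ne'
  have hCttop : Ct ≠ ⊤ := by
    refine ENNReal.add_ne_top.2 ⟨?_, hCptop⟩
    exact ENNReal.mul_ne_top (ENNReal.mul_ne_top (ENNReal.pow_ne_top hCptop)
      (ENNReal.pow_ne_top (by norm_num))) hC₀top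
  have hLtop : L ≠ ⊤ := by simp [hLdef, hCttop, max_eq_iff]
  refine ⟨L, hLtop, ?_⟩
  rw [omNorm]
  refine iSup_le fun a => iSup_le fun r => iSup_le fun hr => ?_
  rw [ballNorm]
  refine sInf_le ⟨zero_lt_one.trans_le hL1, ?_⟩
  calc (∫⁻ x in ball a r, Φ ((fun x : EuclideanSpace ℝ (Fin d) => geninv Φ (φ ‖x‖)) x / L))
      ≤ ∫⁻ x in ball a r, L⁻¹ * φ ‖x‖ := by
        refine lintegral_mono fun x => ?_
        exact (young_div_le hΦ hL1 _).trans (mul_le_mul_right (young_geninv_le hΦ _) _)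
    _ = L⁻¹ * ∫⁻ x in ball a r, φ ‖x‖ :=
        lintegral_const_mul' _ _ (ENNReal.inv_ne_top.2 hL0)
    _ ≤ L⁻¹ * (Ct * (φ r * volume (ball a r))) :=
        mul_le_mul_right (ball_lintegral_le' hd φ hCp1 hCptop hdec hintb a hr) _
    _ = (L⁻¹ * Ct) * (φ r * volume (ball a r)) := by ring
    _ ≤ 1 * (φ r * volume (ball a r)) := by
        refine mul_le_mul_left ?_ _
        calc L⁻¹ * Ct ≤ L⁻¹ * L := mul_le_mul_right (le_max_right _ _) _
          _ = 1 := ENNReal.inv_mul_cancel hL0 hLtop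
    _ = φ r * volume (ball a r) := one_mul _
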